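/- Let a family of closed intervals I(v) = [ℓ(v), r(v)], v ∈ V, have pairwise distinct endpoints, and suppose the corresponding interval graph is connected. Define a sequence by: a₁ is the vertex minimizing ℓ; given aᵢ, let 𝒜ᵢ = { v : ℓ(aᵢ) < ℓ(v) < r(aᵢ) < r(v) }; if 𝒜ᵢ = ∅ stop, else a_{i+1} = argmax over 𝒜ᵢ of r. Then the resulting sequence a₁,…,a_p is an induced path in the interval graph; i.e., consecutive intervals intersect, and r(aᵢ) < ℓ(a_{i+2}) for all 1 ≤ i ≤ p−2. -/
import Mathlib


/-- The greedy sequence of farthest-reaching intervals forms an induced path in the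
interval graph: consecutive members are adjacent, `r(aᵢ) < ℓ(a_(i+2))`, and
non-consecutive members are non-adjacent. -/
theorem stmt6 {V : Type*} [Fintype V] (l r : V → ℝ)
    (hlr : ∀ v, l v < r v)
    (hdist : ∀ v w : V, v ≠ w → l v ≠ l w ∧ r v ≠ r w ∧ l v ≠ r w)
    (H : SimpleGraph V)
    (hH : ∀ v w : V, H.Adj v w ↔
      v ≠ w ∧ (Set.Icc (l v) (r v) ∩ Set.Icc (l w) (r w)).Nonempty)
    (hconn : H.Connected)
    (p : ℕ) (a : ℕ → V)
    (ha0 : ∀ v, l (a 0) ≤ l v)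
    (hstep : ∀ i, i + 1 < p →
      (l (a i) < l (a (i + 1)) ∧ l (a (i + 1)) < r (a i) ∧ r (a i) < r (a (i + 1))) ∧
      (∀ v, l (a i) < l v → l v < r (a i) → r (a i) < r v → r v ≤ r (a (i + 1)))) :
    (∀ i, i + 1 < p → H.Adj (a i) (a (i + 1))) ∧
    (∀ i, i + 2 < p → r (a i) < l (a (i + 2))) ∧
    (∀ i j, j < p → i + 2 ≤ j → ¬ H.Adj (a i) (a j)) := by
  have hadj : ∀ i, i + 1 < p → H.Adj (a i) (a (i + 1)) := by
    intro i hi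
    obtain ⟨⟨h1, h2, h3⟩, _⟩ := hstep i hi
    rw [hH]
    refine ⟨fun heq => ?_, ⟨l (a (i + 1)), ⟨le_of_lt h1, le_of_lt h2⟩,
      le_refl _, le_of_lt (hlr _)⟩⟩
    rw [heq] at h1; exact lt_irrefl _ h1
  have hgap : ∀ i, i + 2 < p → r (a i) < l (a (i + 2)) := by
    intro i hi
    have hi1 : i + 1 < p := by omega
    obtain ⟨⟨h1, h2, h3⟩, hmax⟩ := hstep i hi1
    obtain ⟨⟨g1, g2, g3⟩, _⟩ := hstep (i + 1) hi
    by_contra hc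
    push_neg at hc
    have hne : a (i + 2) ≠ a i := by
      intro heq; rw [heq] at g3; linarith
    have hneq : l (a (i + 2)) ≠ r (a i) := (hdist _ _ hne).2.2
    have hlt : l (a (i + 2)) < r (a i) := lt_of_le_of_ne hc hneq
    have := hmax (a (i + 2)) (by linarith) hlt (by linarith)
    linarith
  refine ⟨hadj, hgap, ?_⟩
  have hmono : ∀ m k, k ≤ m → m < p → l (a k) ≤ l (a m) := by
    intro m
    induction m with
    | zero => intro k hk _; interval_cases k; exact le_refl _
    | succ n ih =>
      intro k hk hm
      rcases Nat.eq_or_lt_of_le hk with heq | hlt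
      · rw [heq]
      · have hn : n < p := by omega
        have h1 := ih k (by omega) hn
        have h2 := (hstep n hm).1.1
        linarith
  intro i j hj hij hadj2
  rw [hH] at hadj2
  obtain ⟨_, x, ⟨_, hx2⟩, hx3, _⟩ := hadj2
  have hi2 : i + 2 < p := by omega
  have h1 := hgap i hi2
  have h2 := hmono j (i + 2) hij hj
  linarith
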